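/- Let P be a finite point set in ℝ² and let an s-WSPD of P be given with s > 4. The graph WS_s(P) on P, with an edge between the representatives of every well-separated pair weighted by their Euclidean distance, is a geometric t-spanner of P for t = (s+4)/(s−4): for all p ≠ q in P, the shortest-path distance in WS_s(P) between p and q is at most ((s+4)/(s−4))·‖p − q‖₂. -/

import Mathlib

noncomputable section

abbrev E2 := EuclideanSpace ℝ (Fin 2)

/-- `U` and `V` are `s`-well separated: each lies in a ball of radius `d` and the two
balls are at distance at least `s·d`. -/
def WellSeparated (s : ℝ) (U V : Set E2) : Prop :=
  ∃ (x y : E2) (d : ℝ), 0 ≤ d ∧ (∀ u ∈ U, dist u x ≤ d) ∧ (∀ v ∈ V, dist v y ≤ d) ∧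
    s * d + 2 * d ≤ dist x y

/-- Total weight of a path given as a list of consecutive vertices. -/
def pathCost (w : E2 → E2 → ℝ) : List E2 → ℝ
  | [] => 0
  | [_] => 0
  | p :: q :: t => w p q + pathCost w (q :: t)

/-- `l` is a walk from `p` to `q` along edges of the adjacency relation `Adj`. -/
def IsWalk (Adj : E2 → E2 → Prop) (p q : E2) (l : List E2) : Prop :=
  l.head? = some p ∧ l.getLast? = some q ∧ l.Chain' Adj

lemma pathCost_append (w : E2 → E2 → ℝ) (l1 : List E2) (u v : E2) (t : List E2)
    (h : l1.getLast? = some u) :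
    pathCost w (l1 ++ v :: t) = pathCost w l1 + w u v + pathCost w (v :: t) := by
  induction l1 with
  | nil => simp at h
  | cons a l ih =>
    cases l with
    | nil =>
      simp only [List.getLast?_singleton, Option.some.injEq] at h
      subst h
      simp [pathCost]
    | cons b l' =>
      have h' : (b :: l').getLast? = some u := by
        rw [List.getLast?_cons_cons] at h; exact h
      have := ih h'
      simp only [List.cons_append] at this
      show w a b + pathCost w (b :: (l' ++ v :: t)) =
        (w a b + pathCost w (b :: l')) + w u v + pathCost w (v :: t)
      rw [this]; ring

lemma geo (s d : ℝ) (x y p q u v : E2) (hsep : s * d + 2 * d ≤ dist x y)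
    (hp : dist p x ≤ d) (hu : dist u x ≤ d) (hq : dist q y ≤ d) (hv : dist v y ≤ d) :
    dist p u ≤ 2 * d ∧ dist q v ≤ 2 * d ∧ s * d ≤ dist p q ∧
      dist u v ≤ dist p q + 4 * d := by
  have t1 := dist_triangle p x u
  have t2 := dist_triangle q y v
  have t3 := dist_triangle x p y
  have t4 := dist_triangle p q y
  have t5 := dist_triangle u x v
  have t6 := dist_triangle x y v
  have c1 : dist x u = dist u x := dist_comm x u
  have c2 : dist y v = dist v y := dist_comm y v
  have c3 : dist x p = dist p x := dist_comm x p
  have c4 : dist q y = dist y q := dist_comm q y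
  refine ⟨by linarith, by linarith, by linarith, by linarith⟩

/-- The graph `WS_s(P)` with an edge between the representatives of each
well-separated pair of an `s`-WSPD of `P` is a geometric `(s+4)/(s-4)`-spanner:
between any two distinct points of `P` there is a path of Euclidean length at most
`((s+4)/(s-4))·‖p - q‖₂`. -/
theorem wspd_spanner {ι : Type*} (P : Finset E2) (s : ℝ) (hs : 4 < s)
    (U V : ι → Set E2) (uRep vRep : ι → E2)
    (hUP : ∀ i, U i ⊆ (P : Set E2)) (hVP : ∀ i, V i ⊆ (P : Set E2))
    (hWS : ∀ i, WellSeparated s (U i) (V i))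
    (huRep : ∀ i, uRep i ∈ U i) (hvRep : ∀ i, vRep i ∈ V i)
    (hcover : ∀ p ∈ P, ∀ q ∈ P, p ≠ q →
      ∃! i, (p ∈ U i ∧ q ∈ V i) ∨ (p ∈ V i ∧ q ∈ U i)) :
    ∀ p ∈ P, ∀ q ∈ P, p ≠ q →
      ∃ l : List E2,
        IsWalk (fun x y => ∃ i, (x = uRep i ∧ y = vRep i) ∨ (x = vRep i ∧ y = uRep i))
          p q l ∧
        pathCost dist l ≤ (s + 4) / (s - 4) * dist p q := by
  set Adj : E2 → E2 → Prop :=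
    fun x y => ∃ i, (x = uRep i ∧ y = vRep i) ∨ (x = vRep i ∧ y = uRep i) with hAdj
  set t : ℝ := (s + 4) / (s - 4) with ht
  have hs4 : (0:ℝ) < s - 4 := by linarith
  have htm : t * (s - 4) = s + 4 := div_mul_cancel₀ _ (ne_of_gt hs4)
  have ht1 : 1 ≤ t := by
    rw [le_div_iff₀ hs4]; linarith
  set Dset : Finset ℝ := (P ×ˢ P).image (fun pr => dist pr.1 pr.2) with hD
  -- main claim, by strong induction on the number of smaller pair-distances
  have main : ∀ n : ℕ, ∀ p ∈ P, ∀ q ∈ P,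
      (Dset.filter (· < dist p q)).card < n →
      ∃ l : List E2, IsWalk Adj p q l ∧ pathCost dist l ≤ t * dist p q := by
    intro n
    induction n with
    | zero => intro p _ q _ h; omega
    | succ n ih =>
      intro p hp q hq hcard
      by_cases hpq : p = q
      · refine ⟨[p], ⟨rfl, by simp [hpq], List.isChain_singleton _⟩, ?_⟩
        have : pathCost dist [p] = 0 := rfl
        rw [this, hpq]
        simp
      · -- get the well-separated pair containing (p, q)
        obtain ⟨i, hi, -⟩ := hcover p hp q hq hpq
        obtain ⟨x, y, d, hd0, hxU, hyV, hsep⟩ := hWS i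
        -- u, v: endpoints of the edge, with p near u and q near v
        obtain ⟨u, v, hu, hv, huv, hpu2, hqv2, hsd, hduv⟩ :
            ∃ u v : E2, u ∈ P ∧ v ∈ P ∧ Adj u v ∧ dist p u ≤ 2 * d ∧
              dist q v ≤ 2 * d ∧ s * d ≤ dist p q ∧ dist u v ≤ dist p q + 4 * d := by
          rcases hi with ⟨hpU, hqV⟩ | ⟨hpV, hqU⟩
          · obtain ⟨g1, g2, g3, g4⟩ := geo s d x y p q (uRep i) (vRep i) hsep
              (hxU _ hpU) (hxU _ (huRep i)) (hyV _ hqV) (hyV _ (hvRep i))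
            exact ⟨uRep i, vRep i, hUP i (huRep i), hVP i (hvRep i),
              ⟨i, Or.inl ⟨rfl, rfl⟩⟩, g1, g2, g3, g4⟩
          · have hsep' : s * d + 2 * d ≤ dist y x := by rwa [dist_comm]
            obtain ⟨g1, g2, g3, g4⟩ := geo s d y x p q (vRep i) (uRep i) hsep'
              (hyV _ hpV) (hyV _ (hvRep i)) (hxU _ hqU) (hxU _ (huRep i))
            exact ⟨vRep i, uRep i, hVP i (hvRep i), hUP i (huRep i),
              ⟨i, Or.inr ⟨rfl, rfl⟩⟩, g1, g2, g3, g4⟩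
        have hDpos : 0 < dist p q := dist_pos.mpr hpq
        have hdD : d * s ≤ dist p q := by linarith [hsd]
        -- distances to the representatives are strictly smaller
        have hkey : ∀ a b : E2, a ∈ P → b ∈ P → dist a b < dist p q →
            (Dset.filter (· < dist a b)).card < n := by
          intro a b ha hb hlt
          have hmem : dist a b ∈ Dset.filter (· < dist p q) := by
            simp only [Finset.mem_filter, hD, Finset.mem_image]
            exact ⟨⟨(a, b), Finset.mem_product.mpr ⟨ha, hb⟩, rfl⟩, hlt⟩
          have hss : Dset.filter (· < dist a b) ⊂ Dset.filter (· < dist p q) := by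
            refine (Finset.ssubset_iff_of_subset
              (Finset.monotone_filter_right _ ?_)).mpr ⟨dist a b, hmem, ?_⟩
            · exact fun r _ hr => lt_trans hr hlt
            · simp only [Finset.mem_filter, not_and]
              exact fun _ => lt_irrefl _
          have := Finset.card_lt_card hss
          omega
        have hpulq : dist p u < dist p q := by nlinarith
        have hqvlq : dist q v < dist p q := by nlinarith
        -- get the two sub-walks
        obtain ⟨l1, ⟨h1h, h1l, h1c⟩, h1cost⟩ : ∃ l, IsWalk Adj p u l ∧
            pathCost dist l ≤ t * dist p u := by
          by_cases h : p = u
          · refine ⟨[p], ⟨rfl, by simp [h], List.isChain_singleton _⟩, ?_⟩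
            have : pathCost dist [p] = 0 := rfl
            rw [this]; positivity
          · exact ih p hp u hu (hkey p u hp hu hpulq)
        obtain ⟨l2, ⟨h2h, h2l, h2c⟩, h2cost⟩ : ∃ l, IsWalk Adj v q l ∧
            pathCost dist l ≤ t * dist v q := by
          by_cases h : v = q
          · refine ⟨[v], ⟨rfl, by simp [h], List.isChain_singleton _⟩, ?_⟩
            have : pathCost dist [v] = 0 := rfl
            rw [this]; positivity
          · have : dist v q < dist p q := by rw [dist_comm]; exact hqvlq
            exact ih v hv q hq (hkey v q hv hq this)
        -- l2 starts with v
        obtain ⟨l2', rfl⟩ : ∃ l2', l2 = v :: l2' := by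
          cases l2 with
          | nil => simp at h2h
          | cons a l => simp only [List.head?_cons, Option.some.injEq] at h2h
                        exact ⟨l, by rw [h2h]⟩
        have hl1ne : l1 ≠ [] := by intro h; rw [h] at h1h; simp at h1h
        refine ⟨l1 ++ v :: l2', ⟨?_, ?_, ?_⟩, ?_⟩
        · rw [List.head?_append]
          cases l1 with
          | nil => exact absurd rfl hl1ne
          | cons a l => simpa using h1h
        · rw [List.getLast?_append]
          rw [show (v :: l2').getLast? = some q from h2l]
          rfl
        · rw [show List.Chain' Adj (l1 ++ v :: l2') ↔ List.IsChain Adj (l1 ++ v :: l2') from Iff.rfl, List.isChain_append]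
          refine ⟨h1c, h2c, ?_⟩
          intro a ha b hb
          rw [h1l] at ha
          simp only [Option.mem_def, Option.some.injEq, List.head?_cons] at ha hb
          subst ha; subst hb; exact huv
        · rw [pathCost_append dist l1 u v l2' h1l]
          have hvq : dist v q = dist q v := dist_comm v q
          -- cost ≤ t * dist p u + dist u v + t * dist q v ≤ t * dist p q
          have h2cost' : pathCost dist (v :: l2') ≤ t * dist q v := by
            rw [hvq] at h2cost; exact h2cost
          have ht0 : 0 ≤ t := by linarith
          have key : t * dist p u + dist u v + t * dist q v ≤ t * dist p q := by
            nlinarith [mul_le_mul_of_nonneg_left hpu2 ht0,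
              mul_le_mul_of_nonneg_left hqv2 ht0,
              mul_le_mul_of_nonneg_left hdD (sub_nonneg.mpr ht1)]
          linarith
  intro p hp q hq _
  exact main ((Dset.filter (· < dist p q)).card + 1) p hp q hq (Nat.lt_succ_self _)
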